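/- Let G be a one-dimensional simplicial complex that is the Barycentric refinement of a graph (so the underlying graph is bipartite with parts given by the dimension of simplices). Then, in a suitable basis given by a diagonal ±1 matrix U, the Hodge Laplacian H = (d+d^*)^2 satisfies U H U^T = L - L^{-1}, where L is the connection matrix of G. In particular, H and L - L^{-1} are similar matrices. -/

import Mathlib

open Matrix

set_option maxHeartbeats 1000000

/-- Hydrogen and Hodge: let `Γ` be the Barycentric refinement graph of a
one-dimensional simplicial complex `K` (vertices of `Γ` are the simplices of
`K`, adjacent iff one strictly contains the other), let `H = H0 ⊕ H1` be the
Hodge Laplacian of `Γ` built from an incidence matrix `d0`, and let `L` be the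
connection matrix of the one-dimensional complex of `Γ` (indexed by vertices
and edges of `Γ`). Then `L` is invertible and, in a suitable basis given by a
diagonal `±1` matrix `U`, one has `U H Uᵀ = L - L⁻¹`; in particular `H` and
`L - L⁻¹` are similar. -/
theorem hydrogen_hodge {V : Type*} [Fintype V] [DecidableEq V]
    (K : Finset (Finset V))
    (hK1 : ∀ x ∈ K, x.card = 1 ∨ x.card = 2)
    (hKc : ∀ x ∈ K, ∀ y ⊆ x, y.Nonempty → y ∈ K)
    (Γ : SimpleGraph {x // x ∈ K}) [DecidableRel Γ.Adj]
    (hΓ : ∀ x y, Γ.Adj x y ↔ ((x : Finset V) ⊂ (y : Finset V) ∨ (y : Finset V) ⊂ (x : Finset V)))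
    (E : Type*) [Fintype E] [DecidableEq E]
    (t h : E → {x // x ∈ K})
    (hth : ∀ e, Γ.Adj (t e) (h e))
    (hbij : ∀ u v, Γ.Adj u v → ∃! e, s(t e, h e) = s(u, v))
    (d0 : Matrix E {x // x ∈ K} ℝ)
    (hd0 : ∀ e v, d0 e v = if v = h e then 1 else if v = t e then -1 else 0)
    (ends : ({x // x ∈ K} ⊕ E) → Finset {x // x ∈ K})
    (hends : ∀ z, ends z = Sum.elim (fun x => ({x} : Finset {x // x ∈ K}))
      (fun e => {t e, h e}) z)
    (L : Matrix ({x // x ∈ K} ⊕ E) ({x // x ∈ K} ⊕ E) ℝ)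
    (hL : ∀ z w, L z w = if (ends z ∩ ends w).Nonempty then 1 else 0) :
    IsUnit L.det ∧
    ∃ U : Matrix ({x // x ∈ K} ⊕ E) ({x // x ∈ K} ⊕ E) ℝ,
      U.IsDiag ∧ (∀ i, U i i = 1 ∨ U i i = -1) ∧
      U * (Matrix.fromBlocks (d0.transpose * d0) 0 0 (d0 * d0.transpose)) * U.transpose =
        L - L⁻¹ := by
  classical
  set s : {x // x ∈ K} → ℝ := fun x => if (x : Finset V).card = 1 then 1 else -1 with hs
  have hs2 : ∀ x, s x * s x = 1 := by
    intro x; simp only [hs]; split <;> norm_num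
  have hne : ∀ e, t e ≠ h e := fun e => Γ.ne_of_adj (hth e)
  have hopp : ∀ e, s (t e) * s (h e) = -1 := by
    intro e
    have hadj := (hΓ _ _).mp (hth e)
    have hc1 := hK1 _ (t e).2
    have hc2 := hK1 _ (h e).2
    simp only [hs]
    rcases hadj with hlt | hlt <;> have hcc := Finset.card_lt_card hlt <;>
      rcases hc1 with h1 | h1 <;> rcases hc2 with h2 | h2 <;>
      rw [h1, h2] at hcc ⊢ <;> first | omega | norm_num
  -- distinct edges share at most one vertex
  have hunique : ∀ e f : E, ∀ v w : {x // x ∈ K}, v ≠ w →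
      (v = t e ∨ v = h e) → (v = t f ∨ v = h f) →
      (w = t e ∨ w = h e) → (w = t f ∨ w = h f) → e = f := by
    intro e f v w hvw hve hvf hwe hwf
    have hsym : s(t f, h f) = s(t e, h e) := by
      rcases hve with rfl | rfl <;> rcases hwe with rfl | rfl <;>
        first
          | exact absurd rfl hvw
          | (rw [Sym2.eq_iff]
             rcases hvf with h4 | h4 <;> rcases hwf with h5 | h5 <;>
               first
                 | exact Or.inl ⟨(by first | exact h4 | exact h4.symm | exact h5 | exact h5.symm), (by first | exact h4 | exact h4.symm | exact h5 | exact h5.symm)⟩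
                 | exact Or.inr ⟨(by first | exact h4 | exact h4.symm | exact h5 | exact h5.symm), (by first | exact h4 | exact h4.symm | exact h5 | exact h5.symm)⟩
                 | exact absurd (by first | exact h4.trans h5.symm | exact h4.symm.trans h5 | exact h5.trans h4.symm | exact h5.symm.trans h4) (hne e))
    obtain ⟨g, hg, hgu⟩ := hbij (t e) (h e) (hth e)
    have h1 : e = g := hgu e rfl
    have h2 : f = g := hgu f hsym
    rw [h1, h2]
  set B : Matrix E {x // x ∈ K} ℝ :=
    Matrix.of (fun e v => if v = t e ∨ v = h e then 1 else 0) with hB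
  -- BBᵀ entries as cardinality of intersections
  have hBBt : ∀ e f, (B * Bᵀ) e f =
      (((Finset.univ.filter
        (fun v => (v = t e ∨ v = h e) ∧ (v = t f ∨ v = h f)))).card : ℝ) := by
    intro e f
    rw [Matrix.mul_apply]
    simp only [hB, Matrix.transpose_apply, Matrix.of_apply, ite_mul, one_mul, zero_mul,
      mul_ite, mul_one, mul_zero]
    rw [← Finset.sum_boole]
    congr 1
    ext v
    by_cases h1 : v = t e ∨ v = h e <;> by_cases h2 : v = t f ∨ v = h f <;>
      simp [h1, h2]
  have hBBt_diag : ∀ e, (B * Bᵀ) e e = 2 := by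
    intro e
    rw [hBBt]
    have : (Finset.univ.filter
        (fun v => (v = t e ∨ v = h e) ∧ (v = t e ∨ v = h e))) = {t e, h e} := by
      ext v; simp [Finset.mem_insert]
    rw [this, Finset.card_insert_of_notMem (by simp [hne e]), Finset.card_singleton]
    norm_num
  have hBBt_off : ∀ e f, e ≠ f → (B * Bᵀ) e f =
      if (({t e, h e} : Finset {x // x ∈ K}) ∩ {t f, h f}).Nonempty then 1 else 0 := by
    intro e f hef
    rw [hBBt]
    have hset : (Finset.univ.filter
        (fun v => (v = t e ∨ v = h e) ∧ (v = t f ∨ v = h f))) =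
        (({t e, h e} : Finset {x // x ∈ K}) ∩ {t f, h f}) := by
      ext v; simp [Finset.mem_inter, Finset.mem_insert]
    rw [hset]
    have hle : (({t e, h e} : Finset {x // x ∈ K}) ∩ {t f, h f}).card ≤ 1 := by
      rw [Finset.card_le_one]
      intro a ha b hb
      simp only [Finset.mem_inter, Finset.mem_insert, Finset.mem_singleton] at ha hb
      by_contra hab
      exact hef (hunique e f a b hab ha.1 ha.2 hb.1 hb.2)
    split_ifs with hN
    · have h1 : 1 ≤ (({t e, h e} : Finset {x // x ∈ K}) ∩ {t f, h f}).card :=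
        Finset.card_pos.mpr hN
      have : (({t e, h e} : Finset {x // x ∈ K}) ∩ {t f, h f}).card = 1 := le_antisymm hle h1
      rw [this]; norm_num
    · rw [Finset.not_nonempty_iff_eq_empty] at hN
      rw [hN]; simp
  -- L as a block matrix
  have hLeq : L = fromBlocks 1 Bᵀ B (B * Bᵀ - 1) := by
    ext z w
    rcases z with x | e <;> rcases w with y | f
    · rw [hL, hends, hends, Sum.elim_inl, Sum.elim_inl]
      simp only [Sum.elim_inl, fromBlocks_apply₁₁, Matrix.one_apply]
      by_cases hxy : x = y
      · subst hxy; simp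
      · rw [if_neg hxy, if_neg]
        rintro ⟨v, hv⟩
        simp only [Finset.mem_inter, Finset.mem_singleton] at hv
        exact hxy (hv.1.symm.trans hv.2)
    · rw [hL, hends, hends, Sum.elim_inl, Sum.elim_inr]
      simp only [Sum.elim_inl, Sum.elim_inr, fromBlocks_apply₁₂, Matrix.transpose_apply,
        hB, Matrix.of_apply]
      by_cases hx : x = t f ∨ x = h f
      · rw [if_pos hx, if_pos]
        refine ⟨x, Finset.mem_inter.mpr ⟨Finset.mem_singleton_self x, ?_⟩⟩
        rcases hx with rfl | rfl <;> simp
      · rw [if_neg hx, if_neg]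
        rintro ⟨v, hv⟩
        simp only [Finset.mem_inter, Finset.mem_singleton, Finset.mem_insert] at hv
        obtain ⟨rfl, hv2⟩ := hv
        exact hx hv2
    · rw [hL, hends, hends, Sum.elim_inl, Sum.elim_inr]
      simp only [Sum.elim_inl, Sum.elim_inr, fromBlocks_apply₂₁, hB, Matrix.of_apply]
      by_cases hx : y = t e ∨ y = h e
      · rw [if_pos hx, if_pos]
        refine ⟨y, Finset.mem_inter.mpr ⟨?_, Finset.mem_singleton_self y⟩⟩
        rcases hx with rfl | rfl <;> simp
      · rw [if_neg hx, if_neg]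
        rintro ⟨v, hv⟩
        simp only [Finset.mem_inter, Finset.mem_singleton, Finset.mem_insert] at hv
        obtain ⟨hv1, rfl⟩ := hv
        exact hx hv1
    · rw [hL, hends, hends, Sum.elim_inr, Sum.elim_inr]
      simp only [Sum.elim_inr, fromBlocks_apply₂₂, Matrix.sub_apply]
      by_cases hef : e = f
      · subst hef
        rw [hBBt_diag, Matrix.one_apply_eq, if_pos ⟨t e, by simp⟩]
        norm_num
      · rw [hBBt_off e f hef, Matrix.one_apply_ne hef]
        norm_num
  -- diagonal sign matrices
  set S : Matrix {x // x ∈ K} {x // x ∈ K} ℝ := Matrix.diagonal (fun x => s x) with hSdef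
  set T : Matrix E E ℝ := Matrix.diagonal (fun e => s (t e)) with hTdef
  have hS2 : S * S = 1 := by
    rw [hSdef, Matrix.diagonal_mul_diagonal, show (fun i => s i * s i) = fun _ => (1 : ℝ)
      from funext hs2, Matrix.diagonal_one]
  have hT2 : T * T = 1 := by
    rw [hTdef, Matrix.diagonal_mul_diagonal, show (fun e => s (t e) * s (t e)) = fun _ => (1 : ℝ)
      from funext (fun e => hs2 (t e)), Matrix.diagonal_one]
  -- the key entrywise identity T * d0 * S = -B
  have hTdS : T * d0 * S = -B := by
    ext e v
    have hentry : (T * d0 * S) e v = s (t e) * d0 e v * s v := by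
      rw [Matrix.mul_diagonal, hTdef, Matrix.diagonal_mul]
    rw [hentry, hd0]
    by_cases h1 : v = h e
    · subst h1
      rw [if_pos rfl]
      have : B e (h e) = 1 := by simp [hB]
      rw [Matrix.neg_apply, this, mul_one]
      exact (hopp e).trans (by norm_num)
    · by_cases h2 : v = t e
      · subst h2
        rw [if_neg h1, if_pos rfl]
        have : B e (t e) = 1 := by simp [hB]
        rw [Matrix.neg_apply, this]
        have := hs2 (t e)
        nlinarith [hs2 (t e)]
      · rw [if_neg h1, if_neg h2]
        have : B e v = 0 := by simp [hB, h1, h2]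
        rw [Matrix.neg_apply, this]
        ring
  -- conjugated Hodge blocks
  have hSt : Sᵀ = S := by rw [hSdef, Matrix.diagonal_transpose]
  have hTt : Tᵀ = T := by rw [hTdef, Matrix.diagonal_transpose]
  have hkey1 : S * (d0ᵀ * d0) * S = Bᵀ * B := by
    have h1 : (T * d0 * S)ᵀ * (T * d0 * S) = S * (d0ᵀ * d0) * S := by
      have hc : T * (T * (d0 * S)) = d0 * S := by
        rw [← Matrix.mul_assoc, hT2, Matrix.one_mul]
      simp only [Matrix.transpose_mul, hSt, hTt, Matrix.mul_assoc]
      rw [hc]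
    rw [hTdS] at h1
    rw [← h1, Matrix.transpose_neg, Matrix.neg_mul, Matrix.mul_neg, neg_neg]
  have hkey2 : T * (d0 * d0ᵀ) * T = B * Bᵀ := by
    have h1 : (T * d0 * S) * (T * d0 * S)ᵀ = T * (d0 * d0ᵀ) * T := by
      have hc : S * (S * (d0ᵀ * T)) = d0ᵀ * T := by
        rw [← Matrix.mul_assoc, hS2, Matrix.one_mul]
      simp only [Matrix.transpose_mul, hSt, hTt, Matrix.mul_assoc]
      rw [hc]
    rw [hTdS] at h1
    rw [← h1, Matrix.transpose_neg, Matrix.neg_mul, Matrix.mul_neg, neg_neg]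
  -- the inverse of L
  set M : Matrix ({x // x ∈ K} ⊕ E) ({x // x ∈ K} ⊕ E) ℝ :=
    fromBlocks (1 - Bᵀ * B) Bᵀ B (-1) with hM
  have hLM : L * M = 1 := by
    rw [hLeq, hM, Matrix.fromBlocks_multiply, ← Matrix.fromBlocks_one,
      Matrix.fromBlocks_inj]
    refine ⟨by noncomm_ring,
      by rw [Matrix.one_mul, Matrix.mul_neg, Matrix.mul_one]; abel,
      by rw [Matrix.mul_sub, Matrix.sub_mul, Matrix.mul_one, Matrix.one_mul,
        Matrix.mul_assoc]; abel,
      by noncomm_ring⟩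
  have hdet : IsUnit L.det := Matrix.isUnit_det_of_right_inverse hLM
  have hLinv : L⁻¹ = M := Matrix.inv_eq_right_inv hLM
  refine ⟨hdet, fromBlocks S 0 0 T, ?_, ?_, ?_⟩
  · exact Matrix.IsDiag.fromBlocks (Matrix.isDiag_diagonal _) (Matrix.isDiag_diagonal _)
  · rintro (x | e)
    · rw [fromBlocks_apply₁₁, hSdef, Matrix.diagonal_apply_eq]
      simp only [hs]; split <;> simp
    · rw [fromBlocks_apply₂₂, hTdef, Matrix.diagonal_apply_eq]
      simp only [hs]; split <;> simp
  · have hUt : (fromBlocks S 0 0 T)ᵀ = fromBlocks S 0 0 T := by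
      rw [Matrix.fromBlocks_transpose, Matrix.transpose_zero, Matrix.transpose_zero,
        hSdef, hTdef, Matrix.diagonal_transpose, Matrix.diagonal_transpose]
    rw [hUt, Matrix.fromBlocks_multiply, Matrix.fromBlocks_multiply]
    simp only [Matrix.mul_zero, Matrix.zero_mul, add_zero, zero_add, Matrix.mul_one,
      Matrix.one_mul, zero_add, add_zero]
    rw [hkey1, hkey2, hLinv, hLeq, hM]
    ext z w
    rcases z with x | e <;> rcases w with y | f <;>
      simp [Matrix.fromBlocks, Matrix.sub_apply] <;> ring
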